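/- Let φ₁ = 7·σ₁[2]⁴ − 72·σ₁[2]²·σ₂[2] + 4320·σ₄[2] + 432·σ₂[4], a homogeneous polynomial of degree 8 in ℂ[x₁,x₂,x₃,x₄]. Then the set of singular points of the projective surface Z(φ₁) ⊆ ℙ³(ℂ) has cardinality exactly 48, and every singular point of Z(φ₁) admits a homogeneous-coordinate representative lying in ℚ⁴. -/

import Mathlib

open MvPolynomial

noncomputable section

/-- Substitution `xᵢ ↦ xᵢᵏ`, giving `f[k]`. -/
def pow (k : ℕ) (f : MvPolynomial (Fin 4) ℂ) : MvPolynomial (Fin 4) ℂ :=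
  aeval (fun i => (X i : MvPolynomial (Fin 4) ℂ) ^ k) f

/-- `σᵢ[k]`: the `i`-th elementary symmetric polynomial in `x₁ᵏ, x₂ᵏ, x₃ᵏ, x₄ᵏ`. -/
def sig (i k : ℕ) : MvPolynomial (Fin 4) ℂ :=
  pow k (esymm (Fin 4) ℂ i)

/-- The set of singular points of the projective hypersurface `Z(f) ⊆ ℙ³(ℂ)`. -/
def SingPts (f : MvPolynomial (Fin 4) ℂ) : Set (Projectivization ℂ (Fin 4 → ℂ)) :=
  {x | eval x.rep f = 0 ∧ ∀ i, eval x.rep (pderiv i f) = 0}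

/-- `φ₁ = 7σ₁[2]⁴ − 72σ₁[2]²σ₂[2] + 4320σ₄[2] + 432σ₂[4]`. -/
def phi1 : MvPolynomial (Fin 4) ℂ :=
  7 * sig 1 2 ^ 4 - 72 * sig 1 2 ^ 2 * sig 2 2 + 4320 * sig 4 2 + 432 * sig 2 4

set_option linter.unnecessarySeqFocus false
set_option linter.unnecessarySimpa false
set_option linter.unusedTactic false
set_option maxRecDepth 100000

namespace Stmt16

def fC (a b c d : ℂ) : ℂ :=
  28*a^3 - 132*a^2*(b+c+d) + 660*a*(b^2+c^2+d^2) - 552*a*(b*c+b*d+c*d)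
  - 44*(b^3+c^3+d^3) - 276*(b^2*c+b^2*d+c^2*b+c^2*d+d^2*b+d^2*c) + 3624*b*c*d

lemma fsym1 (a b c d : ℂ) : fC a b c d = fC a c b d := by simp only [fC]; ring
lemma fsym2 (a b c d : ℂ) : fC a b c d = fC a b d c := by simp only [fC]; ring
lemma fsym3 (a b c d : ℂ) : fC a b c d = fC a c d b := by rw [fsym1, fsym2]

lemma lem1 (x : ℂ) (h : fC x 0 0 0 = 0) : x = 0 := by
  have h3 : x^3 = 0 := by
    have h2 : 28 * x^3 = 0 := by rw [← h]; simp only [fC]; ring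
    linear_combination h2 / 28
  exact pow_eq_zero_iff (by norm_num) |>.mp h3

lemma lem2 (x y : ℂ) (h1 : fC x y 0 0 = 0) (h2 : fC y x 0 0 = 0) : x = 0 ∧ y = 0 := by
  have kx : x^5 = ((30457/663552)*x^2 + (-3047/331776)*x*y + (1309/663552)*y^2)*fC x y 0 0 + ((4301/663552)*x^2 + (-15367/331776)*x*y + (2057/663552)*y^2)*fC y x 0 0 := by simp only [fC]; ring
  have ky : y^5 = ((2057/663552)*x^2 + (-15367/331776)*x*y + (4301/663552)*y^2)*fC x y 0 0 + ((1309/663552)*x^2 + (-3047/331776)*x*y + (30457/663552)*y^2)*fC y x 0 0 := by simp only [fC]; ring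
  rw [h1, h2] at kx ky
  have hx5 : x^5 = 0 := by linear_combination kx
  have hy5 : y^5 = 0 := by linear_combination ky
  exact ⟨pow_eq_zero_iff (by norm_num) |>.mp hx5, pow_eq_zero_iff (by norm_num) |>.mp hy5⟩

lemma lemK (x z : ℂ) (h1 : fC x x z 0 = 0) (h2 : fC z x x 0 = 0) : z = 4*x := by
  have c1 : (z-4*x)^2*x = ((-7/216))*fC x x z 0 + ((-11/216))*fC z x x 0 := by simp only [fC]; ring
  have c2 : (z-4*x)^2*z = ((-5/108))*fC x x z 0 + ((-1/27))*fC z x x 0 := by simp only [fC]; ring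
  rw [h1, h2] at c1 c2
  have c1' : (z-4*x)^2*x = 0 := by linear_combination c1
  have c2' : (z-4*x)^2*z = 0 := by linear_combination c2
  by_cases h : z - 4*x = 0
  · linear_combination h
  · exfalso
    have hx : x = 0 := by
      rcases mul_eq_zero.mp c1' with h'|h'
      · exact absurd (pow_eq_zero_iff (two_ne_zero) |>.mp h') h
      · exact h'
    have hz : z = 0 := by
      rcases mul_eq_zero.mp c2' with h'|h'
      · exact absurd (pow_eq_zero_iff (two_ne_zero) |>.mp h') h
      · exact h'
    exact h (by rw [hx, hz]; ring)

def Out (x y z : ℂ) : Prop := (x = y ∧ z = 4*x) ∨ (x = z ∧ y = 4*x) ∨ (y = z ∧ x = 4*y)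

lemma lem3 (x y z : ℂ) (h1 : fC x y z 0 = 0) (h2 : fC y x z 0 = 0) (h3 : fC z x y 0 = 0) :
    Out x y z := by
  have key : ((x-y)*(y-z)*(z-x))^2 = ((55/20736)*x^2*y + (-4895/1410048)*x^2*z + (1/10368)*x*y^2 + (1573/235008)*x*y*z + (-143/176256)*x*z^2 + (7/20736)*y^3 + (-7951/1410048)*y^2*z + (287/705024)*y*z^2 + (1381/1410048)*z^3)*fC x y z 0 + ((35/20736)*x^2*y + (-3115/1410048)*x^2*z + (-55/10368)*x*y^2 + (1985/235008)*x*y*z + (725/705024)*x*z^2 + (11/20736)*y^3 + (-571/82944)*y^2*z + (-409/352512)*y*z^2 + (1265/1410048)*z^3)*fC y x z 0 + ((-1/408)*y^2*z + (1/816)*y*z^2 + (77/26112)*z^3)*fC z x y 0 := by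
    simp only [fC]; ring
  rw [h1, h2, h3] at key
  have key0 : ((x-y)*((y-z)*(z-x)))^2 = 0 := by linear_combination key
  have key2 : (x-y)*((y-z)*(z-x)) = 0 := pow_eq_zero_iff (two_ne_zero) |>.mp key0
  rcases mul_eq_zero.mp key2 with hxy|hrest
  · have hxy' : x = y := by linear_combination hxy
    rw [← hxy'] at h1 h3
    exact Or.inl ⟨hxy', lemK x z h1 h3⟩
  · rcases mul_eq_zero.mp hrest with hyz|hzx
    · have hyz' : y = z := by linear_combination hyz
      rw [← hyz'] at h1 h2
      rw [fsym1] at h2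
      exact Or.inr (Or.inr ⟨hyz', lemK y x h2 h1⟩)
    · have hzx' : z = x := by linear_combination hzx
      rw [hzx'] at h2 h3
      exact Or.inr (Or.inl ⟨hzx'.symm, lemK x y h3 h2⟩)

set_option maxHeartbeats 4000000 in
lemma lemProd (A B C D : ℂ) (h1 : fC A B C D = 0) (h2 : fC B A C D = 0)
    (h3 : fC C A B D = 0) (h4 : fC D A B C = 0) : A = 0 ∨ B = 0 ∨ C = 0 ∨ D = 0 := by
  have key : (A*(B*(C*D)))^2 = ((-828682245483392003/245376828728091012621312)*A^2*B^3 + (-40910483739167838907/168696569750562571177152)*A^2*B^2*C + (-1652564970388572953203/10796580464036004555337728)*A^2*B^2*D + (14749240545124525693025/43186321856144018221350912)*A^2*B*C^2 + (10107631970965287149/45363783462336153593856)*A^2*B*C*D + (-10974453141395699640217/43186321856144018221350912)*A^2*B*D^2 + (-33438856199241033595/218112736647192011218944)*A^2*C^3 + (-5836676613251388223063/43186321856144018221350912)*A^2*C^2*D + (5557954529980539691925/21593160928072009110675456)*A^2*C*D^2 + (21723119/15663865577472)*A^2*D^3 + (828682245483392003/17526916337720786615808)*A*B^4 + (-3159075846470442521033/2699145116009001138834432)*A*B^3*C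 + (-56510558474258270299/449857519334833523139072)*A*B^3*D + (-3752360599915034513669/4241513753728430361025536)*A*B^2*C^2 + (1804329108939833902406621/237524770208792100217430016)*A*B^2*C*D + (268178649723934988024885/79174923402930700072476672)*A*B^2*D^2 + (138223297325630852096659/79174923402930700072476672)*A*B*C^3 + (-582133684881579688893235/237524770208792100217430016)*A*B*C^2*D + (-179723551763819068229611/33932110029827442888204288)*A*B*C*D^2 + (-647255914893519793752017/237524770208792100217430016)*A*B*D^3 + (369128313148609214261/771184318859714611095552)*A*C^4 + (-1165078569071021318742403/237524770208792100217430016)*A*C^3*D + (302365605132084369696679/237524770208792100217430016)*A*C^2*D^2 + (161765779713327029120855/59381192552198025054357504)*A*C*D^3 + (80967989/5873949591552)*A*D^4 + (-4143411227416960015/245376828728091012621312)*B^5 + (167339872527460395545/29690596276099012527178752)*B^4*C + (186457035518020956041/2423722144987674492014592)*B^4*D + (70533187004217618344183/43186321856144018221350912)*B^3*C^2 + (1715835129825476034983/26391641134310233357492224)*B^3*C*D + (-642487793877818419426051/475049540417584200434860032)*B^3*D^2 + (-704139567607635924031/981507314912364050485248)*B^2*C^3 + (-104681824492416274245797/67864220059654885776408576)*B^2*C^2*D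 + (-45061302287933440674953/16966055014913721444102144)*B^2*C*D^2 + (53953215158794314081151/22621406686551628592136192)*B^2*D^3 + (-45645348658440416110529/43186321856144018221350912)*B*C^4 + (40560232095697995774013/59381192552198025054357504)*B*C^3*D + (118475306416515795930629/33932110029827442888204288)*B*C^2*D^2 + (14083786597905702280021/11310703343275814296068096)*B*C*D^3 + (-4160452857125298910927/17594427422873488904994816)*B*D^4 + (2003345169358883397247/79174923402930700072476672)*C^5 + (55456568013040814916727/67864220059654885776408576)*C^4*D + (166029751957441274597059/237524770208792100217430016)*C^3*D^2 + (-4794135925724209431151/1256744815919534921785344)*C^2*D^3 + (1279218117761592790681/4398606855718372226248704)*C*D^4 + (-80967989/15663865577472)*D^5)*fC A B C D + ((-75334749589399273/35053832675441573231616)*A^2*B^3 + (-40910483739167838907/265094609608026897564096)*A^2*B^2*C + (-1652564970388572953203/16966055014913721444102144)*A^2*B^2*D + (14749240545124525693025/67864220059654885776408576)*A^2*B*C^2 + (10107631970965287149/71285945440813955647488)*A^2*B*C*D + (-10974453141395699640217/67864220059654885776408576)*A^2*B*D^2 + (-33438856199241033595/342748586159873160486912)*A^2*C^3 + (-5836676613251388223063/67864220059654885776408576)*A^2*C^2*D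 + (5557954529980539691925/33932110029827442888204288)*A^2*C*D^2 + (-207130901797751/13404389516941344768)*A^2*D^3 + (979351744662190549/122688414364045506310656)*A*B^4 + (-19405038459110222385317/29690596276099012527178752)*A*B^3*C + (-80839057930389461371/353459479477369196752128)*A*B^3*D + (34301655391053110851481/29690596276099012527178752)*A*B^2*C^2 + (103266337812758231919611/33932110029827442888204288)*A*B^2*C*D + (7918099787738172152803/11310703343275814296068096)*A*B^2*D^2 + (-88001519358702345734785/79174923402930700072476672)*A*B*C^3 + (-12657525231961663241819/4241513753728430361025536)*A*B*C^2*D + (454659346236216623190131/237524770208792100217430016)*A*B*C*D^2 + (10345643966756800867237/29690596276099012527178752)*A*B*D^3 + (14088165619536137901223/16966055014913721444102144)*A*C^4 + (-222952906541630591514775/237524770208792100217430016)*A*C^3*D + (74339717351072432467/109056368323596005609472)*A*C^2*D^2 + (186561251536331131735/981507314912364050485248)*A*C*D^3 + (-38137292533932599076101/79174923402930700072476672)*A*D^4 + (-828682245483392003/14433931101652412507136)*B^5 + (122531832741757307459/245376828728091012621312)*B^4*C + (-151421798394028786675/981507314912364050485248)*B^4*D + (-118876294639287274152533/158349846805861400144953344)*B^3*C^2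 + (81654942746900247977929/33932110029827442888204288)*B^3*C*D + (5963472724336190680957/6169474550877716888764416)*B^3*D^2 + (27358007797451766845111/39587461701465350036238336)*B^2*C^3 + (-18729859894264966265519/158349846805861400144953344)*B^2*C^2*D + (-621005312039062378671379/39587461701465350036238336)*B^2*C*D^2 + (803698519179186637786133/475049540417584200434860032)*B^2*D^3 + (-36499380399364046929693/52783282268620466714984448)*B*C^4 + (1229832653822710052915699/237524770208792100217430016)*B*C^3*D + (86331985505137555084637/26391641134310233357492224)*B*C^2*D^2 + (19680047504227120147/899715038669667046278144)*B*C*D^3 + (-93303360206373661473259/475049540417584200434860032)*B*D^4 + (-15159746668638502692347/237524770208792100217430016)*C^5 + (-148037215471959233068625/475049540417584200434860032)*C^4*D + (133720068763521161521/39587461701465350036238336)*C^3*D^2 + (-1123628004323245565885/1211861072493837246007296)*C^2*D^3 + (26102699842803003317893/33932110029827442888204288)*C*D^4 + (-1449145390043412252425/43186321856144018221350912)*D^5)*fC B A C D + ((82110245051453/5026646068853004288)*A^2*D^3 + (-1023673011542193251005/618554089085396094316224)*A*B^3*C + (-4104677812846916020085/4948432712683168754529792)*A*B^3*D + (14599350225850888458865/6597910283577558339373056)*A*B^2*C^2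 + (187590079927891894675/31187601130356105595776)*A*B^2*C*D + (5689209795807791314441/6597910283577558339373056)*A*B^2*D^2 + (-103869101954982145597/88860744559967115681792)*A*B*C^3 + (-7222772650079330067799/2120756876864215180512768)*A*B*C^2*D + (-803083285695489644389063/237524770208792100217430016)*A*B*C*D^2 + (-1416842786082267936313/2199303427859186113124352)*A*B*D^3 + (10809856817053558764197/19793730850732675018119168)*A*C^4 + (-5630075870423921798221/33932110029827442888204288)*A*C^3*D + (-12321993748900013702471/16966055014913721444102144)*A*C^2*D^2 + (160303528927415784497/1963014629824728100970496)*A*C*D^3 + (4758011386696132314985/9896865425366337509059584)*A*D^4 + (-75334749589399273/3834012948876422072208)*B^5 + (1096921749346339678627/3711324534512376565897344)*B^4*C + (3359569875180666466075/14845298138049506263589376)*B^4*D + (5504486381447289665251/59381192552198025054357504)*B^3*C^2 + (15287068726790632134431/14845298138049506263589376)*B^3*C*D + (-6158779007565377430689/59381192552198025054357504)*B^3*D^2 + (281510616843155996703881/237524770208792100217430016)*B^2*C^3 + (-697528541637640906411355/59381192552198025054357504)*B^2*C^2*D + (-1467906890217951544142693/237524770208792100217430016)*B^2*C*D^2 +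 (6817566718228314870089/8483027507456860722051072)*B^2*D^3 + (-151906439426883860095877/118762385104396050108715008)*B*C^4 + (37837163588042018924695/11310703343275814296068096)*B*C^3*D + (194315465160538333329631/10796580464036004555337728)*B*C^2*D^2 + (79547433183532096228507/79174923402930700072476672)*B*C*D^3 + (-5707362259539669516619/8483027507456860722051072)*B*D^4 + (-653550797182989464329/10796580464036004555337728)*C^5 + (98560836552657152288101/118762385104396050108715008)*C^4*D + (-757292729923080534019/1542368637719429222191104)*C^3*D^2 + (-79115695223601526487321/29690596276099012527178752)*C^2*D^3 + (23859139200956214713167/118762385104396050108715008)*C*D^4 + (148701626321584694137/5398290232018002277668864)*D^5)*fC C A B D + ((-178999365625/484460985360384)*B*C^3*D + (-1504206341725/10173680692568064)*B*C^2*D^2 + (23992873517243/10173680692568064)*B*C*D^3 + (-8228134910641/10173680692568064)*B*D^4 + (755912593445/1695613448761344)*C^4*D + (-6663383190083/10173680692568064)*C^3*D^2 + (-90006479983/53828998373376)*C^2*D^3 + (8827880555485/10173680692568064)*C*D^4 + (-412739261/23495798366208)*D^5)*fC D A B C := by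
    simp only [fC]; ring
  rw [h1, h2, h3, h4] at key
  have key0 : (A*(B*(C*D)))^2 = 0 := by linear_combination key
  have key2 : A*(B*(C*D)) = 0 := pow_eq_zero_iff (two_ne_zero) |>.mp key0
  rcases mul_eq_zero.mp key2 with h|h
  · exact Or.inl h
  rcases mul_eq_zero.mp h with h|h
  · exact Or.inr (Or.inl h)
  rcases mul_eq_zero.mp h with h|h
  · exact Or.inr (Or.inr (Or.inl h))
  · exact Or.inr (Or.inr (Or.inr h))

lemma dim2 (x y : ℂ) (h1 : x = 0 ∨ fC x y 0 0 = 0) (h2 : y = 0 ∨ fC y x 0 0 = 0) :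
    x = 0 ∧ y = 0 := by
  rcases h1 with hx|h1 <;> rcases h2 with hy|h2
  · exact ⟨hx, hy⟩
  · rw [hx] at h2; exact ⟨hx, lem1 y h2⟩
  · rw [hy] at h1; exact ⟨lem1 x h1, hy⟩
  · exact lem2 x y h1 h2

lemma dim3 (x y z : ℂ) (h1 : x = 0 ∨ fC x y z 0 = 0) (h2 : y = 0 ∨ fC y x z 0 = 0)
    (h3 : z = 0 ∨ fC z x y 0 = 0) : Out x y z := by
  rcases h1 with hx|h1
  · have h2' : y = 0 ∨ fC y z 0 0 = 0 := h2.imp_right (fun h => by rw [hx, fsym1] at h; exact h)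
    have h3' : z = 0 ∨ fC z y 0 0 = 0 := h3.imp_right (fun h => by rw [hx, fsym1] at h; exact h)
    obtain ⟨hy, hz⟩ := dim2 y z h2' h3'
    exact Or.inl ⟨by rw [hx, hy], by rw [hz, hx]; ring⟩
  · rcases h2 with hy|h2
    · have h1' : x = 0 ∨ fC x z 0 0 = 0 := Or.inr (by rw [hy, fsym1] at h1; exact h1)
      have h3' : z = 0 ∨ fC z x 0 0 = 0 := h3.imp_right (fun h => by rw [hy] at h; exact h)
      obtain ⟨hx, hz⟩ := dim2 x z h1' h3'
      exact Or.inl ⟨by rw [hx, hy], by rw [hz, hx]; ring⟩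
    · rcases h3 with hz|h3
      · rw [hz] at h1 h2
        obtain ⟨hx, hy⟩ := dim2 x y (Or.inr h1) (Or.inr h2)
        exact Or.inl ⟨by rw [hx, hy], by rw [hz, hx]; ring⟩
      · exact lem3 x y z h1 h2 h3

lemma outAfterA (A B C D : ℂ) (hA : A = 0) (h2 : B = 0 ∨ fC B A C D = 0)
    (h3 : C = 0 ∨ fC C A B D = 0) (h4 : D = 0 ∨ fC D A B C = 0) : Out B C D := by
  refine dim3 B C D (h2.imp_right fun h => ?_) (h3.imp_right fun h => ?_) (h4.imp_right fun h => ?_)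
  · rw [hA, fsym3] at h; exact h
  · rw [hA, fsym3] at h; exact h
  · rw [hA, fsym3] at h; exact h

lemma outAfterB (A B C D : ℂ) (hB : B = 0) (h1 : A = 0 ∨ fC A B C D = 0)
    (h3 : C = 0 ∨ fC C A B D = 0) (h4 : D = 0 ∨ fC D A B C = 0) : Out A C D := by
  refine dim3 A C D (h1.imp_right fun h => ?_) (h3.imp_right fun h => ?_) (h4.imp_right fun h => ?_)
  · rw [hB, fsym3] at h; exact h
  · rw [hB, fsym2] at h; exact h
  · rw [hB, fsym2] at h; exact h

lemma outAfterC (A B C D : ℂ) (hC : C = 0) (h1 : A = 0 ∨ fC A B C D = 0)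
    (h2 : B = 0 ∨ fC B A C D = 0) (h4 : D = 0 ∨ fC D A B C = 0) : Out A B D := by
  refine dim3 A B D (h1.imp_right fun h => ?_) (h2.imp_right fun h => ?_) (h4.imp_right fun h => ?_)
  · rw [hC, fsym2] at h; exact h
  · rw [hC, fsym2] at h; exact h
  · rw [hC] at h; exact h

lemma outAfterD (A B C D : ℂ) (hD : D = 0) (h1 : A = 0 ∨ fC A B C D = 0)
    (h2 : B = 0 ∨ fC B A C D = 0) (h3 : C = 0 ∨ fC C A B D = 0) : Out A B C := by
  refine dim3 A B C (h1.imp_right fun h => ?_) (h2.imp_right fun h => ?_) (h3.imp_right fun h => ?_)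
  · rw [hD] at h; exact h
  · rw [hD] at h; exact h
  · rw [hD] at h; exact h

lemma main12 (A B C D : ℂ) (h1 : A = 0 ∨ fC A B C D = 0) (h2 : B = 0 ∨ fC B A C D = 0)
    (h3 : C = 0 ∨ fC C A B D = 0) (h4 : D = 0 ∨ fC D A B C = 0) :
    (A = 0 ∧ Out B C D) ∨ (B = 0 ∧ Out A C D) ∨ (C = 0 ∧ Out A B D) ∨ (D = 0 ∧ Out A B C) := by
  rcases h1 with hA|hf1
  · exact Or.inl ⟨hA, outAfterA A B C D hA h2 h3 h4⟩
  rcases h2 with hB|hf2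
  · exact Or.inr (Or.inl ⟨hB, outAfterB A B C D hB (Or.inr hf1) h3 h4⟩)
  rcases h3 with hC|hf3
  · exact Or.inr (Or.inr (Or.inl ⟨hC, outAfterC A B C D hC (Or.inr hf1) (Or.inr hf2) h4⟩))
  rcases h4 with hD|hf4
  · exact Or.inr (Or.inr (Or.inr ⟨hD, outAfterD A B C D hD (Or.inr hf1) (Or.inr hf2) (Or.inr hf3)⟩))
  rcases lemProd A B C D hf1 hf2 hf3 hf4 with h|h|h|h
  · exact Or.inl ⟨h, outAfterA A B C D h (Or.inr hf2) (Or.inr hf3) (Or.inr hf4)⟩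
  · exact Or.inr (Or.inl ⟨h, outAfterB A B C D h (Or.inr hf1) (Or.inr hf3) (Or.inr hf4)⟩)
  · exact Or.inr (Or.inr (Or.inl ⟨h, outAfterC A B C D h (Or.inr hf1) (Or.inr hf2) (Or.inr hf4)⟩))
  · exact Or.inr (Or.inr (Or.inr ⟨h, outAfterD A B C D h (Or.inr hf1) (Or.inr hf2) (Or.inr hf3)⟩))


def pts : Finset (Fin 4 → ℤ) :=
  {![0,1,1,2],
   ![0,1,1,-2],
   ![0,1,-1,2],
   ![0,1,-1,-2],
   ![0,1,2,1],
   ![0,1,-2,1],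
   ![0,1,2,-1],
   ![0,1,-2,-1],
   ![0,2,1,1],
   ![0,2,-1,-1],
   ![0,2,1,-1],
   ![0,2,-1,1],
   ![1,0,1,2],
   ![1,0,1,-2],
   ![1,0,-1,2],
   ![1,0,-1,-2],
   ![1,0,2,1],
   ![1,0,-2,1],
   ![1,0,2,-1],
   ![1,0,-2,-1],
   ![2,0,1,1],
   ![2,0,-1,-1],
   ![2,0,1,-1],
   ![2,0,-1,1],
   ![1,1,0,2],
   ![1,1,0,-2],
   ![1,-1,0,2],
   ![1,-1,0,-2],
   ![1,2,0,1],
   ![1,-2,0,1],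
   ![1,2,0,-1],
   ![1,-2,0,-1],
   ![2,1,0,1],
   ![2,-1,0,-1],
   ![2,1,0,-1],
   ![2,-1,0,1],
   ![1,1,2,0],
   ![1,1,-2,0],
   ![1,-1,2,0],
   ![1,-1,-2,0],
   ![1,2,1,0],
   ![1,-2,1,0],
   ![1,2,-1,0],
   ![1,-2,-1,0],
   ![2,1,1,0],
   ![2,-1,-1,0],
   ![2,1,-1,0],
   ![2,-1,1,0]}

def fZ (a b c d : ℤ) : ℤ :=
  28*a^3 - 132*a^2*(b+c+d) + 660*a*(b^2+c^2+d^2) - 552*a*(b*c+b*d+c*d)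
  - 44*(b^3+c^3+d^3) - 276*(b^2*c+b^2*d+c^2*b+c^2*d+d^2*b+d^2*c) + 3624*b*c*d

lemma pts_card : pts.card = 48 := by decide
lemma pts_sumsq : ∀ q ∈ pts, (q 0)^2+(q 1)^2+(q 2)^2+(q 3)^2 = 6 := by decide
lemma pts_neg : ∀ q ∈ pts, ∀ q' ∈ pts, ¬ (q = -q') := by decide
lemma pts_deriv : ∀ q ∈ pts,
    2*(q 0)*fZ ((q 0)^2) ((q 1)^2) ((q 2)^2) ((q 3)^2) = 0 ∧
    2*(q 1)*fZ ((q 1)^2) ((q 0)^2) ((q 2)^2) ((q 3)^2) = 0 ∧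
    2*(q 2)*fZ ((q 2)^2) ((q 0)^2) ((q 1)^2) ((q 3)^2) = 0 ∧
    2*(q 3)*fZ ((q 3)^2) ((q 0)^2) ((q 1)^2) ((q 2)^2) = 0 := by decide

def cv (q : Fin 4 → ℤ) : Fin 4 → ℂ := fun i => ((q i : ℤ) : ℂ)

set_option maxHeartbeats 4000000 in
lemma fwd (v : Fin 4 → ℂ) (hv : v ≠ 0)
    (h0 : v 0 = 0 ∨ fC ((v 0)^2) ((v 1)^2) ((v 2)^2) ((v 3)^2) = 0)
    (h1 : v 1 = 0 ∨ fC ((v 1)^2) ((v 0)^2) ((v 2)^2) ((v 3)^2) = 0)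
    (h2 : v 2 = 0 ∨ fC ((v 2)^2) ((v 0)^2) ((v 1)^2) ((v 3)^2) = 0)
    (h3 : v 3 = 0 ∨ fC ((v 3)^2) ((v 0)^2) ((v 1)^2) ((v 2)^2) = 0) :
    ∃ q ∈ pts, ∃ t : ℂ, t ≠ 0 ∧ v = t • cv q := by
  have sq0 : v 0 = 0 → (v 0)^2 = 0 := fun h => by rw [h]; ring
  have sq1 : v 1 = 0 → (v 1)^2 = 0 := fun h => by rw [h]; ring
  have sq2 : v 2 = 0 → (v 2)^2 = 0 := fun h => by rw [h]; ring
  have sq3 : v 3 = 0 → (v 3)^2 = 0 := fun h => by rw [h]; ring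
  have main := main12 ((v 0)^2) ((v 1)^2) ((v 2)^2) ((v 3)^2)
    (h0.imp_left sq0) (h1.imp_left sq1) (h2.imp_left sq2) (h3.imp_left sq3)
  rcases main with ⟨hz, hout⟩ | ⟨hz, hout⟩ | ⟨hz, hout⟩ | ⟨hz, hout⟩ <;>
    rcases hout with ⟨hp, hf⟩ | ⟨hp, hf⟩ | ⟨hp, hf⟩
  · -- z=0 d=0
    clear h0 h1 h2 h3 sq0 sq1 sq2 sq3
    have hvz : v 0 = 0 := pow_eq_zero_iff two_ne_zero |>.mp hz
    have hpair : (v 2 - v 1) * (v 2 + v 1) = 0 := by linear_combination -hp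
    have hfour : (v 3 - 2*v 1) * (v 3 + 2*v 1) = 0 := by linear_combination hf
    have hb : v 1 ≠ 0 := by
      intro hb0
      apply hv
      have ho : v 2 = 0 := by
        rcases mul_eq_zero.mp hpair with h|h
        · linear_combination h + hb0
        · linear_combination h - hb0
      have h4 : v 3 = 0 := by
        rcases mul_eq_zero.mp hfour with h|h
        · linear_combination h + 2*hb0
        · linear_combination h - 2*hb0
      funext i; fin_cases i <;> simp_all
    rcases mul_eq_zero.mp hpair with hoo|hoo <;> rcases mul_eq_zero.mp hfour with hff|hff
    · refine ⟨![0,1,1,2], by decide, v 1, hb, ?_⟩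
      have ho : v 2 = (v 1) := by linear_combination hoo
      have h4 : v 3 = (2*v 1) := by linear_combination hff
      funext i
      fin_cases i <;> simp [cv, hvz, ho, h4] <;> push_cast <;> ring
    · refine ⟨![0,1,1,-2], by decide, v 1, hb, ?_⟩
      have ho : v 2 = (v 1) := by linear_combination hoo
      have h4 : v 3 = -(2*v 1) := by linear_combination hff
      funext i
      fin_cases i <;> simp [cv, hvz, ho, h4] <;> push_cast <;> ring
    · refine ⟨![0,1,-1,2], by decide, v 1, hb, ?_⟩
      have ho : v 2 = -(v 1) := by linear_combination hoo
      have h4 : v 3 = (2*v 1) := by linear_combination hff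
      funext i
      fin_cases i <;> simp [cv, hvz, ho, h4] <;> push_cast <;> ring
    · refine ⟨![0,1,-1,-2], by decide, v 1, hb, ?_⟩
      have ho : v 2 = -(v 1) := by linear_combination hoo
      have h4 : v 3 = -(2*v 1) := by linear_combination hff
      funext i
      fin_cases i <;> simp [cv, hvz, ho, h4] <;> push_cast <;> ring
  · -- z=0 d=1
    clear h0 h1 h2 h3 sq0 sq1 sq2 sq3
    have hvz : v 0 = 0 := pow_eq_zero_iff two_ne_zero |>.mp hz
    have hpair : (v 3 - v 1) * (v 3 + v 1) = 0 := by linear_combination -hp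
    have hfour : (v 2 - 2*v 1) * (v 2 + 2*v 1) = 0 := by linear_combination hf
    have hb : v 1 ≠ 0 := by
      intro hb0
      apply hv
      have ho : v 3 = 0 := by
        rcases mul_eq_zero.mp hpair with h|h
        · linear_combination h + hb0
        · linear_combination h - hb0
      have h4 : v 2 = 0 := by
        rcases mul_eq_zero.mp hfour with h|h
        · linear_combination h + 2*hb0
        · linear_combination h - 2*hb0
      funext i; fin_cases i <;> simp_all
    rcases mul_eq_zero.mp hpair with hoo|hoo <;> rcases mul_eq_zero.mp hfour with hff|hff
    · refine ⟨![0,1,2,1], by decide, v 1, hb, ?_⟩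
      have ho : v 3 = (v 1) := by linear_combination hoo
      have h4 : v 2 = (2*v 1) := by linear_combination hff
      funext i
      fin_cases i <;> simp [cv, hvz, ho, h4] <;> push_cast <;> ring
    · refine ⟨![0,1,-2,1], by decide, v 1, hb, ?_⟩
      have ho : v 3 = (v 1) := by linear_combination hoo
      have h4 : v 2 = -(2*v 1) := by linear_combination hff
      funext i
      fin_cases i <;> simp [cv, hvz, ho, h4] <;> push_cast <;> ring
    · refine ⟨![0,1,2,-1], by decide, v 1, hb, ?_⟩
      have ho : v 3 = -(v 1) := by linear_combination hoo
      have h4 : v 2 = (2*v 1) := by linear_combination hff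
      funext i
      fin_cases i <;> simp [cv, hvz, ho, h4] <;> push_cast <;> ring
    · refine ⟨![0,1,-2,-1], by decide, v 1, hb, ?_⟩
      have ho : v 3 = -(v 1) := by linear_combination hoo
      have h4 : v 2 = -(2*v 1) := by linear_combination hff
      funext i
      fin_cases i <;> simp [cv, hvz, ho, h4] <;> push_cast <;> ring
  · -- z=0 d=2
    clear h0 h1 h2 h3 sq0 sq1 sq2 sq3
    have hvz : v 0 = 0 := pow_eq_zero_iff two_ne_zero |>.mp hz
    have hpair : (v 3 - v 2) * (v 3 + v 2) = 0 := by linear_combination -hp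
    have hfour : (v 1 - 2*v 2) * (v 1 + 2*v 2) = 0 := by linear_combination hf
    have hb : v 2 ≠ 0 := by
      intro hb0
      apply hv
      have ho : v 3 = 0 := by
        rcases mul_eq_zero.mp hpair with h|h
        · linear_combination h + hb0
        · linear_combination h - hb0
      have h4 : v 1 = 0 := by
        rcases mul_eq_zero.mp hfour with h|h
        · linear_combination h + 2*hb0
        · linear_combination h - 2*hb0
      funext i; fin_cases i <;> simp_all
    rcases mul_eq_zero.mp hpair with hoo|hoo <;> rcases mul_eq_zero.mp hfour with hff|hff
    · refine ⟨![0,2,1,1], by decide, v 2, hb, ?_⟩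
      have ho : v 3 = (v 2) := by linear_combination hoo
      have h4 : v 1 = (2*v 2) := by linear_combination hff
      funext i
      fin_cases i <;> simp [cv, hvz, ho, h4] <;> push_cast <;> ring
    · refine ⟨![0,2,-1,-1], by decide, -v 2, (neg_ne_zero.mpr hb), ?_⟩
      have ho : v 3 = (v 2) := by linear_combination hoo
      have h4 : v 1 = -(2*v 2) := by linear_combination hff
      funext i
      fin_cases i <;> simp [cv, hvz, ho, h4] <;> push_cast <;> ring
    · refine ⟨![0,2,1,-1], by decide, v 2, hb, ?_⟩
      have ho : v 3 = -(v 2) := by linear_combination hoo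
      have h4 : v 1 = (2*v 2) := by linear_combination hff
      funext i
      fin_cases i <;> simp [cv, hvz, ho, h4] <;> push_cast <;> ring
    · refine ⟨![0,2,-1,1], by decide, -v 2, (neg_ne_zero.mpr hb), ?_⟩
      have ho : v 3 = -(v 2) := by linear_combination hoo
      have h4 : v 1 = -(2*v 2) := by linear_combination hff
      funext i
      fin_cases i <;> simp [cv, hvz, ho, h4] <;> push_cast <;> ring
  · -- z=1 d=0
    clear h0 h1 h2 h3 sq0 sq1 sq2 sq3
    have hvz : v 1 = 0 := pow_eq_zero_iff two_ne_zero |>.mp hz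
    have hpair : (v 2 - v 0) * (v 2 + v 0) = 0 := by linear_combination -hp
    have hfour : (v 3 - 2*v 0) * (v 3 + 2*v 0) = 0 := by linear_combination hf
    have hb : v 0 ≠ 0 := by
      intro hb0
      apply hv
      have ho : v 2 = 0 := by
        rcases mul_eq_zero.mp hpair with h|h
        · linear_combination h + hb0
        · linear_combination h - hb0
      have h4 : v 3 = 0 := by
        rcases mul_eq_zero.mp hfour with h|h
        · linear_combination h + 2*hb0
        · linear_combination h - 2*hb0
      funext i; fin_cases i <;> simp_all
    rcases mul_eq_zero.mp hpair with hoo|hoo <;> rcases mul_eq_zero.mp hfour with hff|hff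
    · refine ⟨![1,0,1,2], by decide, v 0, hb, ?_⟩
      have ho : v 2 = (v 0) := by linear_combination hoo
      have h4 : v 3 = (2*v 0) := by linear_combination hff
      funext i
      fin_cases i <;> simp [cv, hvz, ho, h4] <;> push_cast <;> ring
    · refine ⟨![1,0,1,-2], by decide, v 0, hb, ?_⟩
      have ho : v 2 = (v 0) := by linear_combination hoo
      have h4 : v 3 = -(2*v 0) := by linear_combination hff
      funext i
      fin_cases i <;> simp [cv, hvz, ho, h4] <;> push_cast <;> ring
    · refine ⟨![1,0,-1,2], by decide, v 0, hb, ?_⟩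
      have ho : v 2 = -(v 0) := by linear_combination hoo
      have h4 : v 3 = (2*v 0) := by linear_combination hff
      funext i
      fin_cases i <;> simp [cv, hvz, ho, h4] <;> push_cast <;> ring
    · refine ⟨![1,0,-1,-2], by decide, v 0, hb, ?_⟩
      have ho : v 2 = -(v 0) := by linear_combination hoo
      have h4 : v 3 = -(2*v 0) := by linear_combination hff
      funext i
      fin_cases i <;> simp [cv, hvz, ho, h4] <;> push_cast <;> ring
  · -- z=1 d=1
    clear h0 h1 h2 h3 sq0 sq1 sq2 sq3
    have hvz : v 1 = 0 := pow_eq_zero_iff two_ne_zero |>.mp hz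
    have hpair : (v 3 - v 0) * (v 3 + v 0) = 0 := by linear_combination -hp
    have hfour : (v 2 - 2*v 0) * (v 2 + 2*v 0) = 0 := by linear_combination hf
    have hb : v 0 ≠ 0 := by
      intro hb0
      apply hv
      have ho : v 3 = 0 := by
        rcases mul_eq_zero.mp hpair with h|h
        · linear_combination h + hb0
        · linear_combination h - hb0
      have h4 : v 2 = 0 := by
        rcases mul_eq_zero.mp hfour with h|h
        · linear_combination h + 2*hb0
        · linear_combination h - 2*hb0
      funext i; fin_cases i <;> simp_all
    rcases mul_eq_zero.mp hpair with hoo|hoo <;> rcases mul_eq_zero.mp hfour with hff|hff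
    · refine ⟨![1,0,2,1], by decide, v 0, hb, ?_⟩
      have ho : v 3 = (v 0) := by linear_combination hoo
      have h4 : v 2 = (2*v 0) := by linear_combination hff
      funext i
      fin_cases i <;> simp [cv, hvz, ho, h4] <;> push_cast <;> ring
    · refine ⟨![1,0,-2,1], by decide, v 0, hb, ?_⟩
      have ho : v 3 = (v 0) := by linear_combination hoo
      have h4 : v 2 = -(2*v 0) := by linear_combination hff
      funext i
      fin_cases i <;> simp [cv, hvz, ho, h4] <;> push_cast <;> ring
    · refine ⟨![1,0,2,-1], by decide, v 0, hb, ?_⟩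
      have ho : v 3 = -(v 0) := by linear_combination hoo
      have h4 : v 2 = (2*v 0) := by linear_combination hff
      funext i
      fin_cases i <;> simp [cv, hvz, ho, h4] <;> push_cast <;> ring
    · refine ⟨![1,0,-2,-1], by decide, v 0, hb, ?_⟩
      have ho : v 3 = -(v 0) := by linear_combination hoo
      have h4 : v 2 = -(2*v 0) := by linear_combination hff
      funext i
      fin_cases i <;> simp [cv, hvz, ho, h4] <;> push_cast <;> ring
  · -- z=1 d=2
    clear h0 h1 h2 h3 sq0 sq1 sq2 sq3
    have hvz : v 1 = 0 := pow_eq_zero_iff two_ne_zero |>.mp hz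
    have hpair : (v 3 - v 2) * (v 3 + v 2) = 0 := by linear_combination -hp
    have hfour : (v 0 - 2*v 2) * (v 0 + 2*v 2) = 0 := by linear_combination hf
    have hb : v 2 ≠ 0 := by
      intro hb0
      apply hv
      have ho : v 3 = 0 := by
        rcases mul_eq_zero.mp hpair with h|h
        · linear_combination h + hb0
        · linear_combination h - hb0
      have h4 : v 0 = 0 := by
        rcases mul_eq_zero.mp hfour with h|h
        · linear_combination h + 2*hb0
        · linear_combination h - 2*hb0
      funext i; fin_cases i <;> simp_all
    rcases mul_eq_zero.mp hpair with hoo|hoo <;> rcases mul_eq_zero.mp hfour with hff|hff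
    · refine ⟨![2,0,1,1], by decide, v 2, hb, ?_⟩
      have ho : v 3 = (v 2) := by linear_combination hoo
      have h4 : v 0 = (2*v 2) := by linear_combination hff
      funext i
      fin_cases i <;> simp [cv, hvz, ho, h4] <;> push_cast <;> ring
    · refine ⟨![2,0,-1,-1], by decide, -v 2, (neg_ne_zero.mpr hb), ?_⟩
      have ho : v 3 = (v 2) := by linear_combination hoo
      have h4 : v 0 = -(2*v 2) := by linear_combination hff
      funext i
      fin_cases i <;> simp [cv, hvz, ho, h4] <;> push_cast <;> ring
    · refine ⟨![2,0,1,-1], by decide, v 2, hb, ?_⟩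
      have ho : v 3 = -(v 2) := by linear_combination hoo
      have h4 : v 0 = (2*v 2) := by linear_combination hff
      funext i
      fin_cases i <;> simp [cv, hvz, ho, h4] <;> push_cast <;> ring
    · refine ⟨![2,0,-1,1], by decide, -v 2, (neg_ne_zero.mpr hb), ?_⟩
      have ho : v 3 = -(v 2) := by linear_combination hoo
      have h4 : v 0 = -(2*v 2) := by linear_combination hff
      funext i
      fin_cases i <;> simp [cv, hvz, ho, h4] <;> push_cast <;> ring
  · -- z=2 d=0
    clear h0 h1 h2 h3 sq0 sq1 sq2 sq3
    have hvz : v 2 = 0 := pow_eq_zero_iff two_ne_zero |>.mp hz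
    have hpair : (v 1 - v 0) * (v 1 + v 0) = 0 := by linear_combination -hp
    have hfour : (v 3 - 2*v 0) * (v 3 + 2*v 0) = 0 := by linear_combination hf
    have hb : v 0 ≠ 0 := by
      intro hb0
      apply hv
      have ho : v 1 = 0 := by
        rcases mul_eq_zero.mp hpair with h|h
        · linear_combination h + hb0
        · linear_combination h - hb0
      have h4 : v 3 = 0 := by
        rcases mul_eq_zero.mp hfour with h|h
        · linear_combination h + 2*hb0
        · linear_combination h - 2*hb0
      funext i; fin_cases i <;> simp_all
    rcases mul_eq_zero.mp hpair with hoo|hoo <;> rcases mul_eq_zero.mp hfour with hff|hff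
    · refine ⟨![1,1,0,2], by decide, v 0, hb, ?_⟩
      have ho : v 1 = (v 0) := by linear_combination hoo
      have h4 : v 3 = (2*v 0) := by linear_combination hff
      funext i
      fin_cases i <;> simp [cv, hvz, ho, h4] <;> push_cast <;> ring
    · refine ⟨![1,1,0,-2], by decide, v 0, hb, ?_⟩
      have ho : v 1 = (v 0) := by linear_combination hoo
      have h4 : v 3 = -(2*v 0) := by linear_combination hff
      funext i
      fin_cases i <;> simp [cv, hvz, ho, h4] <;> push_cast <;> ring
    · refine ⟨![1,-1,0,2], by decide, v 0, hb, ?_⟩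
      have ho : v 1 = -(v 0) := by linear_combination hoo
      have h4 : v 3 = (2*v 0) := by linear_combination hff
      funext i
      fin_cases i <;> simp [cv, hvz, ho, h4] <;> push_cast <;> ring
    · refine ⟨![1,-1,0,-2], by decide, v 0, hb, ?_⟩
      have ho : v 1 = -(v 0) := by linear_combination hoo
      have h4 : v 3 = -(2*v 0) := by linear_combination hff
      funext i
      fin_cases i <;> simp [cv, hvz, ho, h4] <;> push_cast <;> ring
  · -- z=2 d=1
    clear h0 h1 h2 h3 sq0 sq1 sq2 sq3
    have hvz : v 2 = 0 := pow_eq_zero_iff two_ne_zero |>.mp hz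
    have hpair : (v 3 - v 0) * (v 3 + v 0) = 0 := by linear_combination -hp
    have hfour : (v 1 - 2*v 0) * (v 1 + 2*v 0) = 0 := by linear_combination hf
    have hb : v 0 ≠ 0 := by
      intro hb0
      apply hv
      have ho : v 3 = 0 := by
        rcases mul_eq_zero.mp hpair with h|h
        · linear_combination h + hb0
        · linear_combination h - hb0
      have h4 : v 1 = 0 := by
        rcases mul_eq_zero.mp hfour with h|h
        · linear_combination h + 2*hb0
        · linear_combination h - 2*hb0
      funext i; fin_cases i <;> simp_all
    rcases mul_eq_zero.mp hpair with hoo|hoo <;> rcases mul_eq_zero.mp hfour with hff|hff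
    · refine ⟨![1,2,0,1], by decide, v 0, hb, ?_⟩
      have ho : v 3 = (v 0) := by linear_combination hoo
      have h4 : v 1 = (2*v 0) := by linear_combination hff
      funext i
      fin_cases i <;> simp [cv, hvz, ho, h4] <;> push_cast <;> ring
    · refine ⟨![1,-2,0,1], by decide, v 0, hb, ?_⟩
      have ho : v 3 = (v 0) := by linear_combination hoo
      have h4 : v 1 = -(2*v 0) := by linear_combination hff
      funext i
      fin_cases i <;> simp [cv, hvz, ho, h4] <;> push_cast <;> ring
    · refine ⟨![1,2,0,-1], by decide, v 0, hb, ?_⟩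
      have ho : v 3 = -(v 0) := by linear_combination hoo
      have h4 : v 1 = (2*v 0) := by linear_combination hff
      funext i
      fin_cases i <;> simp [cv, hvz, ho, h4] <;> push_cast <;> ring
    · refine ⟨![1,-2,0,-1], by decide, v 0, hb, ?_⟩
      have ho : v 3 = -(v 0) := by linear_combination hoo
      have h4 : v 1 = -(2*v 0) := by linear_combination hff
      funext i
      fin_cases i <;> simp [cv, hvz, ho, h4] <;> push_cast <;> ring
  · -- z=2 d=2
    clear h0 h1 h2 h3 sq0 sq1 sq2 sq3
    have hvz : v 2 = 0 := pow_eq_zero_iff two_ne_zero |>.mp hz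
    have hpair : (v 3 - v 1) * (v 3 + v 1) = 0 := by linear_combination -hp
    have hfour : (v 0 - 2*v 1) * (v 0 + 2*v 1) = 0 := by linear_combination hf
    have hb : v 1 ≠ 0 := by
      intro hb0
      apply hv
      have ho : v 3 = 0 := by
        rcases mul_eq_zero.mp hpair with h|h
        · linear_combination h + hb0
        · linear_combination h - hb0
      have h4 : v 0 = 0 := by
        rcases mul_eq_zero.mp hfour with h|h
        · linear_combination h + 2*hb0
        · linear_combination h - 2*hb0
      funext i; fin_cases i <;> simp_all
    rcases mul_eq_zero.mp hpair with hoo|hoo <;> rcases mul_eq_zero.mp hfour with hff|hff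
    · refine ⟨![2,1,0,1], by decide, v 1, hb, ?_⟩
      have ho : v 3 = (v 1) := by linear_combination hoo
      have h4 : v 0 = (2*v 1) := by linear_combination hff
      funext i
      fin_cases i <;> simp [cv, hvz, ho, h4] <;> push_cast <;> ring
    · refine ⟨![2,-1,0,-1], by decide, -v 1, (neg_ne_zero.mpr hb), ?_⟩
      have ho : v 3 = (v 1) := by linear_combination hoo
      have h4 : v 0 = -(2*v 1) := by linear_combination hff
      funext i
      fin_cases i <;> simp [cv, hvz, ho, h4] <;> push_cast <;> ring
    · refine ⟨![2,1,0,-1], by decide, v 1, hb, ?_⟩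
      have ho : v 3 = -(v 1) := by linear_combination hoo
      have h4 : v 0 = (2*v 1) := by linear_combination hff
      funext i
      fin_cases i <;> simp [cv, hvz, ho, h4] <;> push_cast <;> ring
    · refine ⟨![2,-1,0,1], by decide, -v 1, (neg_ne_zero.mpr hb), ?_⟩
      have ho : v 3 = -(v 1) := by linear_combination hoo
      have h4 : v 0 = -(2*v 1) := by linear_combination hff
      funext i
      fin_cases i <;> simp [cv, hvz, ho, h4] <;> push_cast <;> ring
  · -- z=3 d=0
    clear h0 h1 h2 h3 sq0 sq1 sq2 sq3
    have hvz : v 3 = 0 := pow_eq_zero_iff two_ne_zero |>.mp hz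
    have hpair : (v 1 - v 0) * (v 1 + v 0) = 0 := by linear_combination -hp
    have hfour : (v 2 - 2*v 0) * (v 2 + 2*v 0) = 0 := by linear_combination hf
    have hb : v 0 ≠ 0 := by
      intro hb0
      apply hv
      have ho : v 1 = 0 := by
        rcases mul_eq_zero.mp hpair with h|h
        · linear_combination h + hb0
        · linear_combination h - hb0
      have h4 : v 2 = 0 := by
        rcases mul_eq_zero.mp hfour with h|h
        · linear_combination h + 2*hb0
        · linear_combination h - 2*hb0
      funext i; fin_cases i <;> simp_all
    rcases mul_eq_zero.mp hpair with hoo|hoo <;> rcases mul_eq_zero.mp hfour with hff|hff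
    · refine ⟨![1,1,2,0], by decide, v 0, hb, ?_⟩
      have ho : v 1 = (v 0) := by linear_combination hoo
      have h4 : v 2 = (2*v 0) := by linear_combination hff
      funext i
      fin_cases i <;> simp [cv, hvz, ho, h4] <;> push_cast <;> ring
    · refine ⟨![1,1,-2,0], by decide, v 0, hb, ?_⟩
      have ho : v 1 = (v 0) := by linear_combination hoo
      have h4 : v 2 = -(2*v 0) := by linear_combination hff
      funext i
      fin_cases i <;> simp [cv, hvz, ho, h4] <;> push_cast <;> ring
    · refine ⟨![1,-1,2,0], by decide, v 0, hb, ?_⟩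
      have ho : v 1 = -(v 0) := by linear_combination hoo
      have h4 : v 2 = (2*v 0) := by linear_combination hff
      funext i
      fin_cases i <;> simp [cv, hvz, ho, h4] <;> push_cast <;> ring
    · refine ⟨![1,-1,-2,0], by decide, v 0, hb, ?_⟩
      have ho : v 1 = -(v 0) := by linear_combination hoo
      have h4 : v 2 = -(2*v 0) := by linear_combination hff
      funext i
      fin_cases i <;> simp [cv, hvz, ho, h4] <;> push_cast <;> ring
  · -- z=3 d=1
    clear h0 h1 h2 h3 sq0 sq1 sq2 sq3
    have hvz : v 3 = 0 := pow_eq_zero_iff two_ne_zero |>.mp hz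
    have hpair : (v 2 - v 0) * (v 2 + v 0) = 0 := by linear_combination -hp
    have hfour : (v 1 - 2*v 0) * (v 1 + 2*v 0) = 0 := by linear_combination hf
    have hb : v 0 ≠ 0 := by
      intro hb0
      apply hv
      have ho : v 2 = 0 := by
        rcases mul_eq_zero.mp hpair with h|h
        · linear_combination h + hb0
        · linear_combination h - hb0
      have h4 : v 1 = 0 := by
        rcases mul_eq_zero.mp hfour with h|h
        · linear_combination h + 2*hb0
        · linear_combination h - 2*hb0
      funext i; fin_cases i <;> simp_all
    rcases mul_eq_zero.mp hpair with hoo|hoo <;> rcases mul_eq_zero.mp hfour with hff|hff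
    · refine ⟨![1,2,1,0], by decide, v 0, hb, ?_⟩
      have ho : v 2 = (v 0) := by linear_combination hoo
      have h4 : v 1 = (2*v 0) := by linear_combination hff
      funext i
      fin_cases i <;> simp [cv, hvz, ho, h4] <;> push_cast <;> ring
    · refine ⟨![1,-2,1,0], by decide, v 0, hb, ?_⟩
      have ho : v 2 = (v 0) := by linear_combination hoo
      have h4 : v 1 = -(2*v 0) := by linear_combination hff
      funext i
      fin_cases i <;> simp [cv, hvz, ho, h4] <;> push_cast <;> ring
    · refine ⟨![1,2,-1,0], by decide, v 0, hb, ?_⟩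
      have ho : v 2 = -(v 0) := by linear_combination hoo
      have h4 : v 1 = (2*v 0) := by linear_combination hff
      funext i
      fin_cases i <;> simp [cv, hvz, ho, h4] <;> push_cast <;> ring
    · refine ⟨![1,-2,-1,0], by decide, v 0, hb, ?_⟩
      have ho : v 2 = -(v 0) := by linear_combination hoo
      have h4 : v 1 = -(2*v 0) := by linear_combination hff
      funext i
      fin_cases i <;> simp [cv, hvz, ho, h4] <;> push_cast <;> ring
  · -- z=3 d=2
    clear h0 h1 h2 h3 sq0 sq1 sq2 sq3
    have hvz : v 3 = 0 := pow_eq_zero_iff two_ne_zero |>.mp hz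
    have hpair : (v 2 - v 1) * (v 2 + v 1) = 0 := by linear_combination -hp
    have hfour : (v 0 - 2*v 1) * (v 0 + 2*v 1) = 0 := by linear_combination hf
    have hb : v 1 ≠ 0 := by
      intro hb0
      apply hv
      have ho : v 2 = 0 := by
        rcases mul_eq_zero.mp hpair with h|h
        · linear_combination h + hb0
        · linear_combination h - hb0
      have h4 : v 0 = 0 := by
        rcases mul_eq_zero.mp hfour with h|h
        · linear_combination h + 2*hb0
        · linear_combination h - 2*hb0
      funext i; fin_cases i <;> simp_all
    rcases mul_eq_zero.mp hpair with hoo|hoo <;> rcases mul_eq_zero.mp hfour with hff|hff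
    · refine ⟨![2,1,1,0], by decide, v 1, hb, ?_⟩
      have ho : v 2 = (v 1) := by linear_combination hoo
      have h4 : v 0 = (2*v 1) := by linear_combination hff
      funext i
      fin_cases i <;> simp [cv, hvz, ho, h4] <;> push_cast <;> ring
    · refine ⟨![2,-1,-1,0], by decide, -v 1, (neg_ne_zero.mpr hb), ?_⟩
      have ho : v 2 = (v 1) := by linear_combination hoo
      have h4 : v 0 = -(2*v 1) := by linear_combination hff
      funext i
      fin_cases i <;> simp [cv, hvz, ho, h4] <;> push_cast <;> ring
    · refine ⟨![2,1,-1,0], by decide, v 1, hb, ?_⟩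
      have ho : v 2 = -(v 1) := by linear_combination hoo
      have h4 : v 0 = (2*v 1) := by linear_combination hff
      funext i
      fin_cases i <;> simp [cv, hvz, ho, h4] <;> push_cast <;> ring
    · refine ⟨![2,-1,1,0], by decide, -v 1, (neg_ne_zero.mpr hb), ?_⟩
      have ho : v 2 = -(v 1) := by linear_combination hoo
      have h4 : v 0 = -(2*v 1) := by linear_combination hff
      funext i
      fin_cases i <;> simp [cv, hvz, ho, h4] <;> push_cast <;> ring

def FC (a b c d : ℂ) : ℂ :=
  7*(a+b+c+d)^4 - 72*(a+b+c+d)^2*(a*b+a*c+a*d+b*c+b*d+c*d) + 4320*(a*b*c*d)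
  + 432*(a^2*b^2+a^2*c^2+a^2*d^2+b^2*c^2+b^2*d^2+c^2*d^2)

lemma esymm1 : (esymm (Fin 4) ℂ 1) = X 0 + X 1 + X 2 + X 3 := by
  rw [esymm_one, Fin.sum_univ_four]
lemma esymm2 : (esymm (Fin 4) ℂ 2) = X 0 * X 1 + X 0 * X 2 + X 0 * X 3 + X 1 * X 2 + X 1 * X 3 + X 2 * X 3 := by
  rw [esymm]
  rw [show (Finset.powersetCard 2 (Finset.univ : Finset (Fin 4))) = {{0,1},{0,2},{0,3},{1,2},{1,3},{2,3}} from by decide]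
  rw [Finset.sum_insert (by decide), Finset.sum_insert (by decide), Finset.sum_insert (by decide),
    Finset.sum_insert (by decide), Finset.sum_insert (by decide), Finset.sum_singleton,
    Finset.prod_insert (by decide), Finset.prod_singleton,
    Finset.prod_insert (by decide), Finset.prod_singleton,
    Finset.prod_insert (by decide), Finset.prod_singleton,
    Finset.prod_insert (by decide), Finset.prod_singleton,
    Finset.prod_insert (by decide), Finset.prod_singleton,
    Finset.prod_insert (by decide), Finset.prod_singleton]
  ring
lemma esymm4 : (esymm (Fin 4) ℂ 4) = X 0 * X 1 * X 2 * X 3 := by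
  rw [esymm]
  rw [show (Finset.powersetCard 4 (Finset.univ : Finset (Fin 4))) = {{0,1,2,3}} from by decide]
  rw [Finset.sum_singleton]
  rw [show ({0,1,2,3} : Finset (Fin 4)) = Finset.univ from by decide]
  rw [Fin.prod_univ_four]
lemma sig12 : sig 1 2 = X 0^2 + X 1^2 + X 2^2 + X 3^2 := by
  rw [sig, pow, esymm1]; simp
lemma sig22 : sig 2 2 = X 0^2*X 1^2 + X 0^2*X 2^2 + X 0^2*X 3^2 + X 1^2*X 2^2 + X 1^2*X 3^2 + X 2^2*X 3^2 := by
  rw [sig, pow, esymm2]; simp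
lemma sig42 : sig 4 2 = X 0^2*X 1^2*X 2^2*X 3^2 := by
  rw [sig, pow, esymm4]; simp
lemma sig24 : sig 2 4 = X 0^4*X 1^4 + X 0^4*X 2^4 + X 0^4*X 3^4 + X 1^4*X 2^4 + X 1^4*X 3^4 + X 2^4*X 3^4 := by
  rw [sig, pow, esymm2]; simp

lemma pderiv_ofNat (i : Fin 4) (n : ℕ) [n.AtLeastTwo] :
    pderiv i (no_index (OfNat.ofNat n) : MvPolynomial (Fin 4) ℂ) = 0 := by
  rw [show (OfNat.ofNat n : MvPolynomial (Fin 4) ℂ) = C (OfNat.ofNat n) from (map_ofNat C n).symm, pderiv_C]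

set_option maxHeartbeats 1000000 in
lemma eval_phi1 (v : Fin 4 → ℂ) :
    eval v phi1 = FC ((v 0)^2) ((v 1)^2) ((v 2)^2) ((v 3)^2) := by
  rw [phi1, sig12, sig22, sig42, sig24]
  simp only [eval_add, eval_sub, eval_mul, eval_pow, eval_X, map_ofNat]
  rw [FC]; ring

set_option maxHeartbeats 2000000 in
lemma eval_pd0 (v : Fin 4 → ℂ) :
    eval v (pderiv 0 phi1) = 2 * v 0 * fC ((v 0)^2) ((v 1)^2) ((v 2)^2) ((v 3)^2) := by
  rw [phi1, sig12, sig22, sig42, sig24]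
  simp only [map_add, map_sub, pderiv_mul, pderiv_pow, pderiv_C, pderiv_ofNat,
    pderiv_X_self, pderiv_X_of_ne (by decide : (1:Fin 4) ≠ 0),
    pderiv_X_of_ne (by decide : (2:Fin 4) ≠ 0), pderiv_X_of_ne (by decide : (3:Fin 4) ≠ 0),
    eval_add, eval_sub, eval_mul, eval_pow, eval_X, eval_C, map_zero, map_one, map_ofNat, map_natCast, Nat.cast_ofNat]
  rw [fC]; ring

set_option maxHeartbeats 2000000 in
lemma eval_pd1 (v : Fin 4 → ℂ) :
    eval v (pderiv 1 phi1) = 2 * v 1 * fC ((v 1)^2) ((v 0)^2) ((v 2)^2) ((v 3)^2) := by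
  rw [phi1, sig12, sig22, sig42, sig24]
  simp only [map_add, map_sub, pderiv_mul, pderiv_pow, pderiv_C, pderiv_ofNat,
    pderiv_X_self, pderiv_X_of_ne (by decide : (0:Fin 4) ≠ 1),
    pderiv_X_of_ne (by decide : (2:Fin 4) ≠ 1), pderiv_X_of_ne (by decide : (3:Fin 4) ≠ 1),
    eval_add, eval_sub, eval_mul, eval_pow, eval_X, eval_C, map_zero, map_one, map_ofNat, map_natCast, Nat.cast_ofNat]
  rw [fC]; ring

set_option maxHeartbeats 2000000 in
lemma eval_pd2 (v : Fin 4 → ℂ) :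
    eval v (pderiv 2 phi1) = 2 * v 2 * fC ((v 2)^2) ((v 0)^2) ((v 1)^2) ((v 3)^2) := by
  rw [phi1, sig12, sig22, sig42, sig24]
  simp only [map_add, map_sub, pderiv_mul, pderiv_pow, pderiv_C, pderiv_ofNat,
    pderiv_X_self, pderiv_X_of_ne (by decide : (0:Fin 4) ≠ 2),
    pderiv_X_of_ne (by decide : (1:Fin 4) ≠ 2), pderiv_X_of_ne (by decide : (3:Fin 4) ≠ 2),
    eval_add, eval_sub, eval_mul, eval_pow, eval_X, eval_C, map_zero, map_one, map_ofNat, map_natCast, Nat.cast_ofNat]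
  rw [fC]; ring

set_option maxHeartbeats 2000000 in
lemma eval_pd3 (v : Fin 4 → ℂ) :
    eval v (pderiv 3 phi1) = 2 * v 3 * fC ((v 3)^2) ((v 0)^2) ((v 1)^2) ((v 2)^2) := by
  rw [phi1, sig12, sig22, sig42, sig24]
  simp only [map_add, map_sub, pderiv_mul, pderiv_pow, pderiv_C, pderiv_ofNat,
    pderiv_X_self, pderiv_X_of_ne (by decide : (0:Fin 4) ≠ 3),
    pderiv_X_of_ne (by decide : (1:Fin 4) ≠ 3), pderiv_X_of_ne (by decide : (2:Fin 4) ≠ 3),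
    eval_add, eval_sub, eval_mul, eval_pow, eval_X, eval_C, map_zero, map_one, map_ofNat, map_natCast, Nat.cast_ofNat]
  rw [fC]; ring

lemma euler_val (a b c d : ℂ) :
    8 * FC (a^2) (b^2) (c^2) (d^2)
      = a * (2*a*fC (a^2) (b^2) (c^2) (d^2)) + b * (2*b*fC (b^2) (a^2) (c^2) (d^2))
      + c * (2*c*fC (c^2) (a^2) (b^2) (d^2)) + d * (2*d*fC (d^2) (a^2) (b^2) (c^2)) := by
  simp only [FC, fC]; ring

lemma mem_iff (x : Projectivization ℂ (Fin 4 → ℂ)) :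
    x ∈ SingPts phi1 ↔ ∀ i, eval x.rep (pderiv i phi1) = 0 := by
  constructor
  · exact fun h => h.2
  · intro h
    refine ⟨?_, h⟩
    have e0 := h 0; have e1 := h 1; have e2 := h 2; have e3 := h 3
    rw [eval_pd0] at e0; rw [eval_pd1] at e1; rw [eval_pd2] at e2; rw [eval_pd3] at e3
    rw [eval_phi1]
    have key := euler_val (x.rep 0) (x.rep 1) (x.rep 2) (x.rep 3)
    rw [e0, e1, e2, e3] at key
    linear_combination key / 8


lemma sumsqC (q : Fin 4 → ℤ) (hq : q ∈ pts) :
    ((q 0:ℂ))^2+((q 1:ℂ))^2+((q 2:ℂ))^2+((q 3:ℂ))^2 = 6 := by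
  have h := pts_sumsq q hq
  have h2 : (((q 0)^2+(q 1)^2+(q 2)^2+(q 3)^2 : ℤ) : ℂ) = ((6:ℤ):ℂ) := by rw [h]
  push_cast at h2
  linear_combination h2

lemma cv_ne_zero (q : Fin 4 → ℤ) (hq : q ∈ pts) : cv q ≠ 0 := by
  intro h
  have h6 := sumsqC q hq
  have hz : ∀ i, (q i : ℂ) = 0 := fun i => congrFun h i
  rw [hz 0, hz 1, hz 2, hz 3] at h6
  norm_num at h6

lemma back0 (q : Fin 4 → ℤ) (hq : q ∈ pts) (t : ℂ) :
    2 * (t*(q 0:ℂ)) * fC ((t*(q 0:ℂ))^2) ((t*(q 1:ℂ))^2) ((t*(q 2:ℂ))^2) ((t*(q 3:ℂ))^2) = 0 := by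
  have hd := (pts_deriv q hq).1
  have key : 2 * (t*(q 0:ℂ)) * fC ((t*(q 0:ℂ))^2) ((t*(q 1:ℂ))^2) ((t*(q 2:ℂ))^2) ((t*(q 3:ℂ))^2)
      = t^7 * ((2*(q 0)*fZ ((q 0)^2) ((q 1)^2) ((q 2)^2) ((q 3)^2) : ℤ) : ℂ) := by
    simp only [fZ, fC]; push_cast; ring
  rw [key, hd]; norm_num

lemma back1 (q : Fin 4 → ℤ) (hq : q ∈ pts) (t : ℂ) :
    2 * (t*(q 1:ℂ)) * fC ((t*(q 1:ℂ))^2) ((t*(q 0:ℂ))^2) ((t*(q 2:ℂ))^2) ((t*(q 3:ℂ))^2) = 0 := by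
  have hd := (pts_deriv q hq).2.1
  have key : 2 * (t*(q 1:ℂ)) * fC ((t*(q 1:ℂ))^2) ((t*(q 0:ℂ))^2) ((t*(q 2:ℂ))^2) ((t*(q 3:ℂ))^2)
      = t^7 * ((2*(q 1)*fZ ((q 1)^2) ((q 0)^2) ((q 2)^2) ((q 3)^2) : ℤ) : ℂ) := by
    simp only [fZ, fC]; push_cast; ring
  rw [key, hd]; norm_num

lemma back2 (q : Fin 4 → ℤ) (hq : q ∈ pts) (t : ℂ) :
    2 * (t*(q 2:ℂ)) * fC ((t*(q 2:ℂ))^2) ((t*(q 0:ℂ))^2) ((t*(q 1:ℂ))^2) ((t*(q 3:ℂ))^2) = 0 := by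
  have hd := (pts_deriv q hq).2.2.1
  have key : 2 * (t*(q 2:ℂ)) * fC ((t*(q 2:ℂ))^2) ((t*(q 0:ℂ))^2) ((t*(q 1:ℂ))^2) ((t*(q 3:ℂ))^2)
      = t^7 * ((2*(q 2)*fZ ((q 2)^2) ((q 0)^2) ((q 1)^2) ((q 3)^2) : ℤ) : ℂ) := by
    simp only [fZ, fC]; push_cast; ring
  rw [key, hd]; norm_num

lemma back3 (q : Fin 4 → ℤ) (hq : q ∈ pts) (t : ℂ) :
    2 * (t*(q 3:ℂ)) * fC ((t*(q 3:ℂ))^2) ((t*(q 0:ℂ))^2) ((t*(q 1:ℂ))^2) ((t*(q 2:ℂ))^2) = 0 := by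
  have hd := (pts_deriv q hq).2.2.2
  have key : 2 * (t*(q 3:ℂ)) * fC ((t*(q 3:ℂ))^2) ((t*(q 0:ℂ))^2) ((t*(q 1:ℂ))^2) ((t*(q 2:ℂ))^2)
      = t^7 * ((2*(q 3)*fZ ((q 3)^2) ((q 0)^2) ((q 1)^2) ((q 2)^2) : ℤ) : ℂ) := by
    simp only [fZ, fC]; push_cast; ring
  rw [key, hd]; norm_num

lemma back (q : Fin 4 → ℤ) (hq : q ∈ pts) (h : cv q ≠ 0) :
    Projectivization.mk ℂ (cv q) h ∈ SingPts phi1 := by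
  rw [mem_iff]
  obtain ⟨a, ha⟩ := Projectivization.exists_smul_eq_mk_rep ℂ (cv q) h
  have hrep : (Projectivization.mk ℂ (cv q) h).rep = fun j => (a:ℂ) * ((q j : ℤ):ℂ) := by
    rw [← ha]; funext j; simp [cv, Units.smul_def]
  intro i
  rw [hrep]
  fin_cases i
  · exact (eval_pd0 _).trans (back0 q hq (a:ℂ))
  · exact (eval_pd1 _).trans (back1 q hq (a:ℂ))
  · exact (eval_pd2 _).trans (back2 q hq (a:ℂ))
  · exact (eval_pd3 _).trans (back3 q hq (a:ℂ))

lemma inj (q : Fin 4 → ℤ) (hq : q ∈ pts) (q' : Fin 4 → ℤ) (hq' : q' ∈ pts)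
    (hmk : Projectivization.mk ℂ (cv q) (cv_ne_zero q hq) = Projectivization.mk ℂ (cv q') (cv_ne_zero q' hq')) :
    q = q' := by
  obtain ⟨t, ht⟩ := (Projectivization.mk_eq_mk_iff' ℂ _ _ (cv_ne_zero q hq) (cv_ne_zero q' hq')).mp hmk
  have hco : ∀ j, t * ((q' j:ℤ):ℂ) = ((q j:ℤ):ℂ) := by
    intro j
    have h2 := congrFun ht j
    simpa [cv] using h2
  have e : t^2*(((q' 0:ℂ))^2+((q' 1:ℂ))^2+((q' 2:ℂ))^2+((q' 3:ℂ))^2)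
      = ((q 0:ℂ))^2+((q 1:ℂ))^2+((q 2:ℂ))^2+((q 3:ℂ))^2 := by
    linear_combination (t*(q' 0:ℂ)+(q 0:ℂ))*hco 0 + (t*(q' 1:ℂ)+(q 1:ℂ))*hco 1
      + (t*(q' 2:ℂ)+(q 2:ℂ))*hco 2 + (t*(q' 3:ℂ)+(q 3:ℂ))*hco 3
  rw [sumsqC q hq, sumsqC q' hq'] at e
  have ht2 : (t-1)*(t+1) = 0 := by linear_combination e/6
  rcases mul_eq_zero.mp ht2 with h1|h1
  · have ht1 : t = 1 := by linear_combination h1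
    funext j
    have h2 := hco j
    rw [ht1, one_mul] at h2
    exact_mod_cast h2.symm
  · have ht1 : t = -1 := by linear_combination h1
    exfalso
    apply pts_neg q hq q' hq'
    funext j
    have h2 := hco j
    rw [ht1] at h2
    have h3 : ((q j:ℤ):ℂ) = ((-(q' j):ℤ):ℂ) := by push_cast; linear_combination -h2
    have h4 : q j = -(q' j) := by exact_mod_cast h3
    simpa using h4

def Pmap (q : Fin 4 → ℤ) : Projectivization ℂ (Fin 4 → ℂ) :=
  if h : cv q ≠ 0 then Projectivization.mk ℂ (cv q) h
  else Projectivization.mk ℂ (fun _ => 1) (by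
    intro hh
    have h2 := congrFun hh 0
    simpa using h2)

lemma Pmap_eq (q : Fin 4 → ℤ) (hq : q ∈ pts) :
    Pmap q = Projectivization.mk ℂ (cv q) (cv_ne_zero q hq) := dif_pos _

lemma sing_eq : SingPts phi1 = Pmap '' (↑pts) := by
  ext x
  constructor
  · intro hx
    have hd := (mem_iff x).mp hx
    have h0 := hd 0; have h1 := hd 1; have h2 := hd 2; have h3 := hd 3
    rw [eval_pd0] at h0; rw [eval_pd1] at h1; rw [eval_pd2] at h2; rw [eval_pd3] at h3
    have mk_disj : ∀ (u : ℂ) (w : ℂ), 2 * u * w = 0 → u = 0 ∨ w = 0 := by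
      intro u w h
      rcases mul_eq_zero.mp h with h'|h'
      · left
        rcases mul_eq_zero.mp h' with h''|h''
        · norm_num at h''
        · exact h''
      · right; exact h'
    obtain ⟨q, hq, t, htne, hveq⟩ := fwd x.rep (Projectivization.rep_nonzero x)
      (mk_disj _ _ h0) (mk_disj _ _ h1) (mk_disj _ _ h2) (mk_disj _ _ h3)
    refine ⟨q, hq, ?_⟩
    rw [Pmap_eq q hq]
    have hmm : Projectivization.mk ℂ x.rep (Projectivization.rep_nonzero x)
        = Projectivization.mk ℂ (cv q) (cv_ne_zero q hq) :=
      (Projectivization.mk_eq_mk_iff' ℂ _ _ _ _).mpr ⟨t, hveq.symm⟩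
    rw [← hmm, Projectivization.mk_rep]
  · rintro ⟨q, hq, rfl⟩
    rw [Pmap_eq q (by exact_mod_cast hq)]
    exact back q (by exact_mod_cast hq) _


end Stmt16

open Stmt16 in
/-- `Z(φ₁) ⊆ ℙ³(ℂ)` has exactly 48 singular points, and each of them
has a homogeneous-coordinate representative with rational coordinates. -/
theorem stmt_16 :
    (SingPts phi1).ncard = 48 ∧
    ∀ x ∈ SingPts phi1, ∃ (q : Fin 4 → ℚ) (h : (fun i => (q i : ℂ)) ≠ 0),
      x = Projectivization.mk ℂ (fun i => (q i : ℂ)) h := by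
  constructor
  · rw [sing_eq, Set.ncard_image_of_injOn, Set.ncard_coe_finset, pts_card]
    intro q hq q' hq' h
    have hq0 : q ∈ pts := by exact_mod_cast hq
    have hq0' : q' ∈ pts := by exact_mod_cast hq'
    rw [Pmap_eq q hq0, Pmap_eq q' hq0'] at h
    exact inj q hq0 q' hq0' h
  · intro x hx
    rw [sing_eq] at hx
    obtain ⟨q, hq, rfl⟩ := hx
    have hq0 : q ∈ pts := by exact_mod_cast hq
    have hfun : (fun i => (((q i : ℚ)) : ℂ)) = cv q := by
      funext i; simp [cv]
    have hne : (fun i => (((q i : ℤ) : ℚ) : ℂ)) ≠ 0 := by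
      rw [show (fun i => (((q i : ℤ) : ℚ) : ℂ)) = cv q from hfun]; exact cv_ne_zero q hq0
    refine ⟨fun j => ((q j : ℤ) : ℚ), hne, ?_⟩
    rw [Pmap_eq q hq0]
    refine (Projectivization.mk_eq_mk_iff' ℂ _ _ _ _).mpr ⟨1, ?_⟩
    rw [one_smul]
    exact hfun
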